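/- Let π_n, π be probability measures on ℝᵈ with finite second moment such that π_n → π in total variation and ∫‖x‖² dπ_n → ∫‖x‖² dπ, and let B_n, B be measurable sets with π(B) > 0 and π(B_n Δ B) → 0 and π_n(B_n) → π(B). Then (1/π_n(B_n)) ∫_{B_n} x π_n(dx) → (1/π(B)) ∫_B x π(dx) in ℝᵈ. -/

import Mathlib

open MeasureTheory Filter Topology symmDiff

/-- Total variation distance between two measures. -/
noncomputable def tvDist {X : Type*} [MeasurableSpace X] (μ ν : MeasureTheory.Measure X) : ℝ :=
  sSup {r : ℝ | ∃ g : X → ℝ, Measurable g ∧ (∀ x, |g x| ≤ 1) ∧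
    r = |(∫ x, g x ∂μ) - ∫ x, g x ∂ν|}

lemma abs_integral_sub_le_tvDist {X : Type*} [MeasurableSpace X] (μ ν : Measure X)
    [IsProbabilityMeasure μ] [IsProbabilityMeasure ν] {g : X → ℝ}
    (hg : Measurable g) (hg1 : ∀ x, |g x| ≤ 1) :
    |(∫ x, g x ∂μ) - ∫ x, g x ∂ν| ≤ tvDist μ ν := by
  apply le_csSup
  · refine ⟨2, ?_⟩
    rintro r ⟨g₁, hg₁m, hg₁, rfl⟩
    have b1 : ‖∫ x, g₁ x ∂μ‖ ≤ 1 := by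
      have := norm_integral_le_of_norm_le_const (μ := μ) (f := g₁) (C := 1)
        (Eventually.of_forall (fun x => by simpa using hg₁ x))
      simpa using this
    have b2 : ‖∫ x, g₁ x ∂ν‖ ≤ 1 := by
      have := norm_integral_le_of_norm_le_const (μ := ν) (f := g₁) (C := 1)
        (Eventually.of_forall (fun x => by simpa using hg₁ x))
      simpa using this
    calc |(∫ x, g₁ x ∂μ) - ∫ x, g₁ x ∂ν| ≤ ‖∫ x, g₁ x ∂μ‖ + ‖∫ x, g₁ x ∂ν‖ := by
          simpa [Real.norm_eq_abs] using abs_sub _ _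
      _ ≤ 2 := by linarith
  · exact ⟨g, hg, hg1, rfl⟩

lemma abs_coord_le_norm {d : ℕ} (x : EuclideanSpace ℝ (Fin d)) (i : Fin d) : |x i| ≤ ‖x‖ := by
  rw [EuclideanSpace.norm_eq]
  have h1 : |x i| = Real.sqrt (|x i| ^ 2) := by
    rw [Real.sqrt_sq (abs_nonneg _)]
  rw [h1]
  apply Real.sqrt_le_sqrt
  calc |x i| ^ 2 = ‖x i‖ ^ 2 := by rw [Real.norm_eq_abs]
    _ ≤ ∑ j, ‖x j‖ ^ 2 :=
      Finset.single_le_sum (f := fun j => ‖x j‖ ^ 2) (fun j _ => by positivity)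
        (Finset.mem_univ i)

lemma tail_bound {d : ℕ} (μ : Measure (EuclideanSpace ℝ (Fin d))) [IsProbabilityMeasure μ]
    (h2 : Integrable (fun x => ‖x‖ ^ 2) μ) (h1 : Integrable (fun x => x) μ)
    {R : ℝ} (hR : 0 < R) {A : Set (EuclideanSpace ℝ (Fin d))} :
    ‖∫ x in A, ({x : EuclideanSpace ℝ (Fin d) | ‖x‖ ≤ R}ᶜ).indicator (fun y => y) x ∂μ‖
      ≤ (∫ x, ‖x‖ ^ 2 ∂μ) / R := by
  set S : Set (EuclideanSpace ℝ (Fin d)) := {x | ‖x‖ ≤ R} with hSdef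
  have hS : MeasurableSet S := measurableSet_le measurable_norm measurable_const
  have hint : Integrable (Sᶜ.indicator (fun y : EuclideanSpace ℝ (Fin d) => y)) μ :=
    h1.indicator hS.compl
  calc ‖∫ x in A, Sᶜ.indicator (fun y => y) x ∂μ‖
      ≤ ∫ x in A, ‖Sᶜ.indicator (fun y => y) x‖ ∂μ := norm_integral_le_integral_norm _
    _ ≤ ∫ x, ‖Sᶜ.indicator (fun y => y) x‖ ∂μ :=
        setIntegral_le_integral hint.norm (Eventually.of_forall fun x => norm_nonneg _)
    _ = ∫ x in Sᶜ, ‖x‖ ∂μ := by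
        simp_rw [norm_indicator_eq_indicator_norm]
        exact integral_indicator hS.compl
    _ ≤ ∫ x in Sᶜ, ‖x‖ ^ 2 / R ∂μ := by
        apply setIntegral_mono_on h1.norm.integrableOn (h2.div_const R).integrableOn hS.compl
        intro x hx
        have hx' : R < ‖x‖ := by simpa [hSdef] using hx
        rw [le_div_iff₀ hR]
        nlinarith [norm_nonneg x]
    _ ≤ ∫ x, ‖x‖ ^ 2 / R ∂μ :=
        setIntegral_le_integral (h2.div_const R) (Eventually.of_forall fun x => by positivity)
    _ = (∫ x, ‖x‖ ^ 2 ∂μ) / R := integral_div R _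

lemma coord_integral {d : ℕ} (T : Set (EuclideanSpace ℝ (Fin d))) (hT : MeasurableSet T)
    (ν : Measure (EuclideanSpace ℝ (Fin d)))
    (hν : Integrable (fun x : EuclideanSpace ℝ (Fin d) => x) ν) (i : Fin d) :
    (∫ x, T.indicator (fun y => y) x ∂ν) i = ∫ x, T.indicator (fun y => y i) x ∂ν := by
  have hint : Integrable (T.indicator (fun y : EuclideanSpace ℝ (Fin d) => y)) ν :=
    hν.indicator hT
  have h := (EuclideanSpace.proj (𝕜 := ℝ) i).integral_comp_comm hint
  have h2 : (∫ x, T.indicator (fun y => y) x ∂ν) i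
      = (EuclideanSpace.proj (𝕜 := ℝ) i) (∫ x, T.indicator (fun y => y) x ∂ν) := rfl
  rw [h2, ← h]
  apply integral_congr_ae
  filter_upwards with x
  by_cases hx : x ∈ T <;> simp [hx]

lemma main_bound {d : ℕ} (μ ν : Measure (EuclideanSpace ℝ (Fin d)))
    [IsProbabilityMeasure μ] [IsProbabilityMeasure ν]
    (h2μ : Integrable (fun x => ‖x‖ ^ 2) μ) (h2ν : Integrable (fun x => ‖x‖ ^ 2) ν)
    (h1μ : Integrable (fun x : EuclideanSpace ℝ (Fin d) => x) μ)
    (h1ν : Integrable (fun x : EuclideanSpace ℝ (Fin d) => x) ν)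
    {A B : Set (EuclideanSpace ℝ (Fin d))} (hA : MeasurableSet A) (hB : MeasurableSet B)
    {R : ℝ} (hR : 0 < R) :
    ‖(∫ x in A, x ∂μ) - ∫ x in B, x ∂ν‖
      ≤ Real.sqrt d * (R * tvDist μ ν) + ((∫ x, ‖x‖ ^ 2 ∂μ) / R + (∫ x, ‖x‖ ^ 2 ∂ν) / R)
        + (‖∫ x in A \ B, x ∂ν‖ + ‖∫ x in B \ A, x ∂ν‖) := by
  set S : Set (EuclideanSpace ℝ (Fin d)) := {x | ‖x‖ ≤ R} with hSdef
  have hS : MeasurableSet S := measurableSet_le measurable_norm measurable_const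
  set A1 := ∫ x in A, S.indicator (fun y => y) x ∂μ with hA1
  set A2 := ∫ x in A, Sᶜ.indicator (fun y => y) x ∂μ with hA2
  set A1' := ∫ x in A, S.indicator (fun y => y) x ∂ν with hA1'
  set A2' := ∫ x in A, Sᶜ.indicator (fun y => y) x ∂ν with hA2'
  set D1 := ∫ x in A \ B, x ∂ν with hD1
  set D2 := ∫ x in B \ A, x ∂ν with hD2
  have hidd : ∀ x : EuclideanSpace ℝ (Fin d), x = S.indicator (fun y => y) x + Sᶜ.indicator (fun y => y) x := by
    intro x
    by_cases hx : x ∈ S <;> simp [hx]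
  have eqsplit : ∀ (ρ : Measure (EuclideanSpace ℝ (Fin d))), Integrable (fun x : EuclideanSpace ℝ (Fin d) => x) ρ →
      ∫ x in A, (fun x => x) x ∂ρ = (∫ x in A, S.indicator (fun y => y) x ∂ρ)
        + ∫ x in A, Sᶜ.indicator (fun y => y) x ∂ρ := by
    intro ρ hρ
    rw [← integral_add (hρ.indicator hS).integrableOn (hρ.indicator hS.compl).integrableOn]
    exact setIntegral_congr_fun hA fun x _ => hidd x
  have eq1 : ∫ x in A, x ∂μ = A1 + A2 := eqsplit μ h1μ
  have eq2 : ∫ x in A, x ∂ν = A1' + A2' := eqsplit ν h1ν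
  have eq3 : ∫ x in A, x ∂ν = (∫ x in A ∩ B, x ∂ν) + D1 :=
    (integral_inter_add_diff hB h1ν.integrableOn).symm
  have eq4 : ∫ x in B, x ∂ν = (∫ x in A ∩ B, x ∂ν) + D2 := by
    rw [Set.inter_comm]
    exact (integral_inter_add_diff hA h1ν.integrableOn).symm
  have eqIB : ∫ x in B, x ∂ν = A1' + A2' - D1 + D2 := by
    have := eq2.symm.trans eq3
    rw [eq4]
    have hK : ∫ x in A ∩ B, x ∂ν = A1' + A2' - D1 := eq_sub_of_add_eq this.symm
    rw [hK]
  have keyeq : (∫ x in A, x ∂μ) - ∫ x in B, x ∂ν = ((A1 - A1') + (A2 - A2')) + (D1 - D2) := by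
    rw [eq1, eqIB]; abel
  -- main TV part
  have hmain : ‖A1 - A1'‖ ≤ Real.sqrt d * (R * tvDist μ ν) := by
    set T := A ∩ S with hT
    have hTm : MeasurableSet T := hA.inter hS
    have hrw : ∀ (ρ : Measure (EuclideanSpace ℝ (Fin d))), ∫ x in A, S.indicator (fun y => y) x ∂ρ
        = ∫ x, T.indicator (fun y => y) x ∂ρ := by
      intro ρ
      rw [← integral_indicator hA, Set.indicator_indicator]
    set v := A1 - A1' with hv
    have hco : ∀ i : Fin d, |v i| ≤ R * tvDist μ ν := by
      intro i
      have hgm : Measurable (fun x : EuclideanSpace ℝ (Fin d) => R⁻¹ * T.indicator (fun y => y i) x) :=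
        measurable_const.mul
          (((EuclideanSpace.proj (𝕜 := ℝ) i).continuous.measurable).indicator hTm)
      have hg1 : ∀ x : EuclideanSpace ℝ (Fin d), |R⁻¹ * T.indicator (fun y => y i) x| ≤ 1 := by
        intro x
        by_cases hx : x ∈ T
        · rw [Set.indicator_of_mem hx, abs_mul, abs_inv, abs_of_pos hR]
          have h1 : |x i| ≤ R := le_trans (abs_coord_le_norm x i) hx.2
          calc R⁻¹ * |x i| ≤ R⁻¹ * R :=
                mul_le_mul_of_nonneg_left h1 (inv_nonneg.2 hR.le)
            _ = 1 := inv_mul_cancel₀ hR.ne'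
        · simp [Set.indicator_of_notMem hx]
      have htv := abs_integral_sub_le_tvDist μ ν hgm hg1
      rw [integral_const_mul, integral_const_mul, ← mul_sub, abs_mul, abs_inv,
        abs_of_pos hR] at htv
      have hvi : v i = (∫ x, T.indicator (fun y => y i) x ∂μ)
          - ∫ x, T.indicator (fun y => y i) x ∂ν := by
        have : v i = A1 i - A1' i := rfl
        rw [this, hA1, hA1', hrw μ, hrw ν, coord_integral T hTm μ h1μ i,
          coord_integral T hTm ν h1ν i]
      rw [hvi]
      rw [inv_mul_le_iff₀ hR] at htv
      exact htv
    have hRt : 0 ≤ R * tvDist μ ν := by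
      rcases Nat.eq_zero_or_pos d with hd | hd
      · subst hd
        -- no coordinates; show tvDist nonneg directly via g = 0
        have h0 := abs_integral_sub_le_tvDist μ ν (g := fun _ => 0) measurable_const
          (fun x => by simp)
        simp at h0
        positivity
      · exact le_trans (abs_nonneg _) (hco ⟨0, hd⟩)
    show ‖v‖ ≤ Real.sqrt d * (R * tvDist μ ν)
    rw [EuclideanSpace.norm_eq]
    have hsum : ∑ i, ‖v i‖ ^ 2 ≤ (d : ℝ) * (R * tvDist μ ν) ^ 2 := by
      calc ∑ i, ‖v i‖ ^ 2 ≤ ∑ _i : Fin d, (R * tvDist μ ν) ^ 2 :=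
            Finset.sum_le_sum fun i _ => by
              rw [Real.norm_eq_abs]
              exact pow_le_pow_left₀ (abs_nonneg _) (hco i) 2
        _ = (d : ℝ) * (R * tvDist μ ν) ^ 2 := by
            simp [Finset.sum_const, Finset.card_univ, nsmul_eq_mul]
    calc Real.sqrt (∑ i, ‖v i‖ ^ 2) ≤ Real.sqrt ((d : ℝ) * (R * tvDist μ ν) ^ 2) :=
          Real.sqrt_le_sqrt hsum
      _ = Real.sqrt d * (R * tvDist μ ν) := by
          rw [Real.sqrt_mul (Nat.cast_nonneg d), Real.sqrt_sq hRt]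
  have t1 : ‖A2‖ ≤ (∫ x, ‖x‖ ^ 2 ∂μ) / R := tail_bound μ h2μ h1μ hR
  have t2 : ‖A2'‖ ≤ (∫ x, ‖x‖ ^ 2 ∂ν) / R := tail_bound ν h2ν h1ν hR
  rw [keyeq]
  calc ‖(A1 - A1') + (A2 - A2') + (D1 - D2)‖
      ≤ ‖A1 - A1'‖ + ‖A2 - A2'‖ + ‖D1 - D2‖ := norm_add₃_le
    _ ≤ ‖A1 - A1'‖ + (‖A2‖ + ‖A2'‖) + (‖D1‖ + ‖D2‖) := by
        gcongr <;> exact norm_sub_le _ _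
    _ ≤ Real.sqrt d * (R * tvDist μ ν) + ((∫ x, ‖x‖ ^ 2 ∂μ) / R + (∫ x, ‖x‖ ^ 2 ∂ν) / R)
        + (‖D1‖ + ‖D2‖) := by gcongr

/-- Convergence of centroids: if `π_n → π` in total variation with convergence of second
moments, `π(B_n Δ B) → 0` and `π_n(B_n) → π(B) > 0`, then the centroids of `B_n` under
`π_n` converge to the centroid of `B` under `π`. -/
theorem stmt_12 {d : ℕ} (πseq : ℕ → Measure (EuclideanSpace ℝ (Fin d)))
    (π : Measure (EuclideanSpace ℝ (Fin d)))
    [∀ n, IsProbabilityMeasure (πseq n)] [IsProbabilityMeasure π]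
    (h2n : ∀ n, Integrable (fun x => ‖x‖ ^ 2) (πseq n))
    (h2 : Integrable (fun x => ‖x‖ ^ 2) π)
    (hidn : ∀ n, Integrable (fun x => x) (πseq n))
    (hid : Integrable (fun x => x) π)
    (hTV : Tendsto (fun n => tvDist (πseq n) π) atTop (𝓝 0))
    (hmom : Tendsto (fun n => ∫ x, ‖x‖ ^ 2 ∂(πseq n)) atTop (𝓝 (∫ x, ‖x‖ ^ 2 ∂π)))
    (Bn : ℕ → Set (EuclideanSpace ℝ (Fin d))) (B : Set (EuclideanSpace ℝ (Fin d)))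
    (hBn : ∀ n, MeasurableSet (Bn n)) (hB : MeasurableSet B)
    (hBpos : 0 < (π B).toReal)
    (hsymm : Tendsto (fun n => (π ((Bn n) ∆ B)).toReal) atTop (𝓝 0))
    (hmass : Tendsto (fun n => ((πseq n) (Bn n)).toReal) atTop (𝓝 ((π B).toReal))) :
    Tendsto (fun n => (((πseq n) (Bn n)).toReal)⁻¹ • ∫ x in Bn n, x ∂(πseq n))
      atTop (𝓝 (((π B).toReal)⁻¹ • ∫ x in B, x ∂π)) := by
  -- symmetric difference measure tends to zero in ℝ≥0∞
  have hsymm' : Tendsto (fun n => π ((Bn n) ∆ B)) atTop (𝓝 0) := by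
    have hne : ∀ n, π ((Bn n) ∆ B) ≠ ⊤ := fun n => measure_ne_top _ _
    exact (ENNReal.tendsto_toReal_iff hne ENNReal.zero_ne_top).mp (by simpa using hsymm)
  have hd1 : Tendsto (fun n => π (Bn n \ B)) atTop (𝓝 0) :=
    tendsto_of_tendsto_of_tendsto_of_le_of_le tendsto_const_nhds hsymm'
      (fun n => zero_le)
      (fun n => measure_mono (by rw [Set.symmDiff_def]; exact Set.subset_union_left))
  have hd2 : Tendsto (fun n => π (B \ Bn n)) atTop (𝓝 0) :=
    tendsto_of_tendsto_of_tendsto_of_le_of_le tendsto_const_nhds hsymm'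
      (fun n => zero_le)
      (fun n => measure_mono (by rw [Set.symmDiff_def]; exact Set.subset_union_right))
  have hD1 : Tendsto (fun n => ∫ x in Bn n \ B, x ∂π) atTop (𝓝 0) :=
    hid.tendsto_setIntegral_nhds_zero hd1
  have hD2 : Tendsto (fun n => ∫ x in B \ Bn n, x ∂π) atTop (𝓝 0) :=
    hid.tendsto_setIntegral_nhds_zero hd2
  -- uniform second moment bound
  obtain ⟨C0, hC0⟩ := hmom.bddAbove_range
  set C : ℝ := max C0 (∫ x, ‖x‖ ^ 2 ∂π) + 1 with hCdef
  have hπ2 : (0:ℝ) ≤ ∫ x, ‖x‖ ^ 2 ∂π := integral_nonneg fun x => by positivity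
  have hCpos : 0 < C := by
    have := le_max_right C0 (∫ x, ‖x‖ ^ 2 ∂π)
    rw [hCdef]; linarith
  have hCn : ∀ n, ∫ x, ‖x‖ ^ 2 ∂(πseq n) ≤ C := by
    intro n
    have h1 : ∫ x, ‖x‖ ^ 2 ∂(πseq n) ≤ C0 := hC0 (Set.mem_range_self n)
    have := le_max_left C0 (∫ x, ‖x‖ ^ 2 ∂π)
    rw [hCdef]; linarith
  have hCπ : ∫ x, ‖x‖ ^ 2 ∂π ≤ C := by
    have := le_max_right C0 (∫ x, ‖x‖ ^ 2 ∂π)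
    rw [hCdef]; linarith
  -- convergence of the set integrals
  have key : Tendsto (fun n => ∫ x in Bn n, x ∂(πseq n)) atTop (𝓝 (∫ x in B, x ∂π)) := by
    rw [Metric.tendsto_atTop]
    intro ε hε
    set R : ℝ := 4 * C / ε with hRdef
    have hR : 0 < R := by positivity
    set b : ℕ → ℝ := fun n => Real.sqrt d * (R * tvDist (πseq n) π) + (C / R + C / R)
        + (‖∫ x in Bn n \ B, x ∂π‖ + ‖∫ x in B \ Bn n, x ∂π‖) with hbdef
    have hbnd : ∀ n, dist (∫ x in Bn n, x ∂(πseq n)) (∫ x in B, x ∂π) ≤ b n := by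
      intro n
      rw [dist_eq_norm]
      refine le_trans (main_bound (πseq n) π (h2n n) h2 (hidn n) hid (hBn n) hB hR) ?_
      have g1 : (∫ x, ‖x‖ ^ 2 ∂(πseq n)) / R ≤ C / R := (div_le_div_iff_of_pos_right hR).mpr (hCn n)
      have g2 : (∫ x, ‖x‖ ^ 2 ∂π) / R ≤ C / R := (div_le_div_iff_of_pos_right hR).mpr hCπ
      have := add_le_add g1 g2
      linarith [this]
    have hblim : Tendsto b atTop
        (𝓝 (Real.sqrt d * (R * 0) + (C / R + C / R) + (‖(0 : EuclideanSpace ℝ (Fin d))‖ + ‖(0 : EuclideanSpace ℝ (Fin d))‖))) := by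
      apply Tendsto.add
      · exact Tendsto.add (tendsto_const_nhds.mul (tendsto_const_nhds.mul hTV)) tendsto_const_nhds
      · exact (hD1.norm).add (hD2.norm)
    have hCR : C / R = ε / 4 := by
      rw [hRdef]
      field_simp
    have hlt : Real.sqrt d * (R * 0) + (C / R + C / R) + (‖(0 : EuclideanSpace ℝ (Fin d))‖ + ‖(0 : EuclideanSpace ℝ (Fin d))‖) < ε := by
      rw [hCR]; simp; linarith
    obtain ⟨N, hN⟩ := (eventually_atTop.mp (hblim.eventually_lt_const hlt))
    exact ⟨N, fun n hn => lt_of_le_of_lt (hbnd n) (hN n hn)⟩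
  have hminv : Tendsto (fun n => (((πseq n) (Bn n)).toReal)⁻¹) atTop
      (𝓝 (((π B).toReal)⁻¹)) := hmass.inv₀ (ne_of_gt hBpos)
  exact hminv.smul key
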